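/- If a random variable X takes values in [0,1] with E[X] = μ and P(X = μ) = p, then E[|X - μ|] ≤ 2(1-p)μ(1-μ), with equality achieved when the conditional distribution of X given X ≠ μ is Bernoulli(μ). -/

import Mathlib

open MeasureTheory

/-- If X takes values in [0,1] with E[X] = μ and P(X = μ) = p, then
E[|X - μ|] ≤ 2(1-p)μ(1-μ), with equality when the conditional distribution of X
given X ≠ μ is Bernoulli(μ). -/
theorem stmt0 {Ω : Type*} [MeasurableSpace Ω] (P : Measure Ω) [IsProbabilityMeasure P]
    (X : Ω → ℝ) (hXm : Measurable X) (hrange : ∀ ω, X ω ∈ Set.Icc (0:ℝ) 1)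
    (μ p : ℝ) (hμ : μ = ∫ ω, X ω ∂P) (hp : p = (P {ω | X ω = μ}).toReal) :
    (∫ ω, |X ω - μ| ∂P) ≤ 2 * (1 - p) * μ * (1 - μ) ∧
    ((∀ᵐ ω ∂P, X ω ≠ μ → X ω = 0 ∨ X ω = 1) →
      (P {ω | X ω = 1 ∧ X ω ≠ μ}).toReal = μ * (1 - p) →
      (∫ ω, |X ω - μ| ∂P) = 2 * (1 - p) * μ * (1 - μ)) := by
  have hX0 : ∀ ω, 0 ≤ X ω := fun ω => (hrange ω).1
  have hX1 : ∀ ω, X ω ≤ 1 := fun ω => (hrange ω).2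
  have hXint : Integrable X P := by
    apply Integrable.mono' (integrable_const (1:ℝ)) hXm.aestronglyMeasurable
    filter_upwards with ω
    rw [Real.norm_eq_abs, abs_of_nonneg (hX0 ω)]; exact hX1 ω
  have hμ0 : 0 ≤ μ := hμ ▸ integral_nonneg hX0
  have hμ1 : μ ≤ 1 := by
    rw [hμ]
    calc ∫ ω, X ω ∂P ≤ ∫ _ω, (1:ℝ) ∂P := integral_mono hXint (integrable_const 1) hX1
    _ = 1 := by simp
  set A : Set Ω := {ω | X ω = μ} with hA_def
  have hA : MeasurableSet A := hXm (measurableSet_singleton μ)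
  -- integrability of |X - μ| and the positive part
  have hsubint : Integrable (fun ω => X ω - μ) P := hXint.sub (integrable_const μ)
  have habsint : Integrable (fun ω => |X ω - μ|) P := hsubint.abs
  have hgint : Integrable (fun ω => max (X ω - μ) 0) P := hsubint.pos_part
  -- ∫ indicator A X = p * μ
  have hindA : ∫ ω, Set.indicator A X ω ∂P = p * μ := by
    have : (Set.indicator A X) = (Set.indicator A (fun _ => μ)) := by
      ext ω; by_cases h : ω ∈ A
      · simp [Set.indicator_of_mem h, h.out]
      · simp [Set.indicator_of_notMem h]
    rw [this, integral_indicator_const μ hA, hp, smul_eq_mul, measureReal_def]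
  have hindAc : ∫ ω, Set.indicator Aᶜ X ω ∂P = μ * (1 - p) := by
    have hsum : ∀ ω, Set.indicator Aᶜ X ω = X ω - Set.indicator A X ω := by
      intro ω; by_cases h : ω ∈ A
      · simp [Set.indicator_of_mem h, Set.indicator_of_notMem (by simpa using h : ω ∉ Aᶜ)]
      · simp [Set.indicator_of_notMem h, Set.indicator_of_mem (by simpa using h : ω ∈ Aᶜ)]
    have hintA : Integrable (fun ω => Set.indicator A X ω) P :=
      hXint.indicator hA
    calc ∫ ω, Set.indicator Aᶜ X ω ∂P
        = ∫ ω, (X ω - Set.indicator A X ω) ∂P := by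
          congr 1; ext ω; exact hsum ω
      _ = (∫ ω, X ω ∂P) - ∫ ω, Set.indicator A X ω ∂P := integral_sub hXint hintA
      _ = μ - p * μ := by rw [← hμ, hindA]
      _ = μ * (1 - p) := by ring
  -- the main bound
  have hfint : Integrable (fun ω => (1 - μ) * Set.indicator Aᶜ X ω) P :=
    (hXint.indicator hA.compl).const_mul _
  have hpt : ∀ ω, max (X ω - μ) 0 ≤ (1 - μ) * Set.indicator Aᶜ X ω := by
    intro ω
    by_cases h : ω ∈ A
    · have : X ω = μ := h.out
      simp [Set.indicator_of_notMem (by simpa using h : ω ∉ Aᶜ), this]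
    · rw [Set.indicator_of_mem (by simpa using h : ω ∈ Aᶜ)]
      rcases le_total (X ω) μ with hc | hc
      · have : max (X ω - μ) 0 = 0 := max_eq_right (by linarith)
        rw [this]; exact mul_nonneg (by linarith) (hX0 ω)
      · have : max (X ω - μ) 0 = X ω - μ := max_eq_left (by linarith)
        rw [this]; nlinarith [hX1 ω, hX0 ω]
  have hg_le : ∫ ω, max (X ω - μ) 0 ∂P ≤ (1 - p) * μ * (1 - μ) := by
    calc ∫ ω, max (X ω - μ) 0 ∂P
        ≤ ∫ ω, (1 - μ) * Set.indicator Aᶜ X ω ∂P := integral_mono hgint hfint hpt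
      _ = (1 - μ) * (μ * (1 - p)) := by rw [integral_const_mul, hindAc]
      _ = (1 - p) * μ * (1 - μ) := by ring
  have habs_eq : ∫ ω, |X ω - μ| ∂P = 2 * ∫ ω, max (X ω - μ) 0 ∂P := by
    have hpt2 : ∀ ω, |X ω - μ| = 2 * max (X ω - μ) 0 - (X ω - μ) := by
      intro ω; rcases le_total (X ω) μ with h | h
      · rw [abs_of_nonpos (by linarith), max_eq_right (by linarith)]; ring
      · rw [abs_of_nonneg (by linarith), max_eq_left (by linarith)]; ring
    calc ∫ ω, |X ω - μ| ∂P
        = ∫ ω, (2 * max (X ω - μ) 0 - (X ω - μ)) ∂P := by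
          congr 1; ext ω; exact hpt2 ω
      _ = 2 * (∫ ω, max (X ω - μ) 0 ∂P) - ((∫ ω, X ω ∂P) - μ) := by
          rw [integral_sub (hgint.const_mul 2) hsubint, integral_const_mul,
            integral_sub hXint (integrable_const μ), integral_const]
          simp
      _ = 2 * ∫ ω, max (X ω - μ) 0 ∂P := by rw [← hμ]; ring
  constructor
  · rw [habs_eq]; linarith
  · intro h1 h2
    set B : Set Ω := {ω | X ω = 1 ∧ X ω ≠ μ} with hB_def
    set C : Set Ω := {ω | X ω = 0 ∧ X ω ≠ μ} with hC_def
    have hB : MeasurableSet B :=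
      (hXm (measurableSet_singleton 1)).inter (hXm (measurableSet_singleton μ)).compl
    have hC : MeasurableSet C :=
      (hXm (measurableSet_singleton 0)).inter (hXm (measurableSet_singleton μ)).compl
    have hAB : Disjoint A B := Set.disjoint_left.mpr (fun ω hωA hωB => hωB.2 hωA)
    have hAC : Disjoint A C := Set.disjoint_left.mpr (fun ω hωA hωC => hωC.2 hωA)
    have hBC : Disjoint B C := Set.disjoint_left.mpr
      (fun ω hωB hωC => by have := hωB.1; have := hωC.1; norm_num [this] at *)
    -- the union has full measure
    have hnull : P (A ∪ B ∪ C)ᶜ = 0 := by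
      have hsub : {ω | ¬(X ω ≠ μ → X ω = 0 ∨ X ω = 1)} ⊇ (A ∪ B ∪ C)ᶜ := by
        intro ω hω
        simp only [Set.mem_compl_iff, Set.mem_union] at hω
        push_neg at hω ⊢
        obtain ⟨⟨hωA, hωB⟩, hωC⟩ := hω
        exact ⟨hωA, fun h0 => hωC ⟨h0, hωA⟩, fun h1' => hωB ⟨h1', hωA⟩⟩
      exact measure_mono_null hsub (by rw [ae_iff] at h1; exact h1)
    have hfull : P (A ∪ B ∪ C) = 1 := by
      rw [← prob_compl_eq_zero_iff ((hA.union hB).union hC)] at *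
      exact hnull
    have hsum : (P A).toReal + (P B).toReal + (P C).toReal = 1 := by
      have : P A + P B + P C = 1 := by
        rw [← hfull, measure_union (Set.disjoint_union_left.mpr ⟨hAC, hBC⟩) hC,
          measure_union hAB hB]
      have := congrArg ENNReal.toReal this
      rwa [ENNReal.toReal_add (by finiteness) (by finiteness),
        ENNReal.toReal_add (by finiteness) (by finiteness), ENNReal.toReal_one] at this
    have hc : (P C).toReal = 1 - p - μ * (1 - p) := by
      linarith [hsum, hp, h2]
    -- pointwise a.e. identity
    have hae : (fun ω => |X ω - μ|) =ᵐ[P]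
        (fun ω => Set.indicator B (fun _ => 1 - μ) ω + Set.indicator C (fun _ => μ) ω) := by
      filter_upwards [h1] with ω hω
      by_cases hμω : X ω = μ
      · rw [Set.indicator_of_notMem (fun h => h.2 hμω),
          Set.indicator_of_notMem (fun h => h.2 hμω), hμω]
        simp
      · rcases hω hμω with h0 | hone
        · have hC' : ω ∈ C := ⟨h0, hμω⟩
          have hB' : ω ∉ B := fun h => by
            have h1'' : X ω = 1 := h.1
            rw [h0] at h1''; norm_num at h1'' 
          rw [Set.indicator_of_notMem hB', Set.indicator_of_mem hC', h0,
            abs_of_nonpos (by linarith)]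
          ring
        · have hB' : ω ∈ B := ⟨hone, hμω⟩
          have hC' : ω ∉ C := fun h => by
            have h0'' : X ω = 0 := h.1
            rw [hone] at h0''; norm_num at h0'' 
          rw [Set.indicator_of_mem hB', Set.indicator_of_notMem hC', hone,
            abs_of_nonneg (by linarith)]
          ring
    rw [integral_congr_ae hae,
      integral_add ((integrable_const _).indicator hB) ((integrable_const _).indicator hC),
      integral_indicator_const _ hB, integral_indicator_const _ hC, smul_eq_mul, smul_eq_mul,
      measureReal_def, measureReal_def, h2, hc]
    ring
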